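/- Let A be a commutative ring, M a group, and B an A-algebra that is finitely generated and free as an A-module. Then for all modules V and W over the group algebra A[M], the natural B-module map Hom_{A[M]}(V, W) ⊗_A B → Hom_{B[M]}(V ⊗_A B, W ⊗_A B), sending φ ⊗ b to the B[M]-linear map determined by v ⊗ b′ ↦ φ(v) ⊗ b·b′, is bijective. -/

import Mathlib

open TensorProduct

set_option linter.unusedSectionVars false

section aux
variable {A : Type*} [CommRing A] {B : Type*} [CommRing B] [Algebra A B]
variable {ι : Type*} [Fintype ι] (𝓑 : Module.Basis ι A B)
variable {N : Type*} [AddCommGroup N] [Module A N]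

noncomputable def coordL (i : ι) : B ⊗[A] N →ₗ[A] N :=
  (TensorProduct.lid A N).toLinearMap ∘ₗ LinearMap.rTensor N (𝓑.coord i)

lemma coordL_tmul (i : ι) (b : B) (n : N) : coordL 𝓑 i (b ⊗ₜ n) = 𝓑.repr b i • n := by
  simp [coordL, Module.Basis.coord_apply]

lemma sum_coordL (x : B ⊗[A] N) : ∑ i, 𝓑 i ⊗ₜ[A] coordL 𝓑 i x = x := by
  induction x using TensorProduct.induction_on with
  | zero => simp
  | tmul b n =>
      simp only [coordL_tmul]
      calc ∑ i, 𝓑 i ⊗ₜ[A] (𝓑.repr b i • n) = ∑ i, (𝓑.repr b i • 𝓑 i) ⊗ₜ[A] n := by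
            simp [TensorProduct.tmul_smul, TensorProduct.smul_tmul']
        _ = b ⊗ₜ[A] n := by rw [← TensorProduct.sum_tmul, Module.Basis.sum_repr]
  | add x y hx hy =>
      simp only [map_add, TensorProduct.tmul_add, Finset.sum_add_distrib, hx, hy]

lemma coordL_basis_sum (w : ι → N) (j : ι) :
    coordL 𝓑 j (∑ i, 𝓑 i ⊗ₜ[A] w i) = w j := by
  classical
  rw [map_sum]
  simp only [coordL_tmul, Module.Basis.repr_self, Finsupp.single_apply]
  simp [Finset.sum_ite_eq]

variable {N' : Type*} [AddCommGroup N'] [Module A N']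

lemma coordL_baseChange (ψ : N →ₗ[A] N') (i : ι) (x : B ⊗[A] N) :
    coordL 𝓑 i (LinearMap.baseChange B ψ x) = ψ (coordL 𝓑 i x) := by
  induction x using TensorProduct.induction_on with
  | zero => simp
  | tmul b n => simp [coordL_tmul]
  | add x y hx hy => simp [hx, hy]

noncomputable def coordR (i : ι) : N ⊗[A] B →ₗ[A] N :=
  (TensorProduct.rid A N).toLinearMap ∘ₗ LinearMap.lTensor N (𝓑.coord i)

lemma coordR_tmul (i : ι) (b : B) (n : N) : coordR 𝓑 i (n ⊗ₜ b) = 𝓑.repr b i • n := by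
  simp [coordR, Module.Basis.coord_apply]

lemma sum_coordR (x : N ⊗[A] B) : ∑ i, coordR 𝓑 i x ⊗ₜ[A] 𝓑 i = x := by
  induction x using TensorProduct.induction_on with
  | zero => simp
  | tmul n b =>
      simp only [coordR_tmul]
      calc ∑ i, (𝓑.repr b i • n) ⊗ₜ[A] 𝓑 i = ∑ i, n ⊗ₜ[A] (𝓑.repr b i • 𝓑 i) := by
            exact Finset.sum_congr rfl fun i _ => TensorProduct.smul_tmul _ _ _
        _ = n ⊗ₜ[A] b := by rw [← TensorProduct.tmul_sum, Module.Basis.sum_repr]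
  | add x y hx hy =>
      simp only [map_add, TensorProduct.add_tmul, Finset.sum_add_distrib, hx, hy]

end aux


section

variable {A : Type*} [CommRing A] {M : Type*} [Group M]
variable {B : Type*} [CommRing B] [Algebra A B]
variable {V : Type*} [AddCommGroup V] [Module A V] [Module (MonoidAlgebra A M) V]
  [IsScalarTower A (MonoidAlgebra A M) V]

/-- The action of `m : M` on an `A[M]`-module as an `A`-linear endomorphism. -/
noncomputable def mAct (m : M) : V →ₗ[A] V where
  toFun v := MonoidAlgebra.of A M m • v
  map_add' _ _ := smul_add _ _ _
  map_smul' a v := smul_comm (MonoidAlgebra.of A M m) a v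

lemma mAct_one : mAct (A := A) (M := M) (V := V) 1 = LinearMap.id := by
  ext v
  show MonoidAlgebra.of A M 1 • v = v
  rw [map_one, one_smul]

lemma mAct_mul (m n : M) :
    mAct (A := A) (M := M) (V := V) (m * n)
      = (mAct (A := A) (V := V) m) ∘ₗ (mAct (A := A) (V := V) n) := by
  ext v
  show MonoidAlgebra.of A M (m * n) • v = MonoidAlgebra.of A M m • (MonoidAlgebra.of A M n • v)
  rw [map_mul, mul_smul]

/-- The base change to `B` of the `M`-action on `V`: the representation of `M` on
`V ⊗_A B = B ⊗[A] V` by `B`-linear endomorphisms, where `M` acts on the factor `V`. -/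
noncomputable def bcRep : M →* Module.End B (B ⊗[A] V) where
  toFun m := LinearMap.baseChange B (mAct (A := A) (M := M) (V := V) m)
  map_one' := by
    show LinearMap.baseChange B (mAct (A := A) (M := M) (V := V) 1) = 1
    rw [mAct_one]
    exact LinearMap.baseChange_id
  map_mul' m n := by
    show LinearMap.baseChange B (mAct (A := A) (M := M) (V := V) (m * n)) = _
    rw [mAct_mul]
    exact LinearMap.baseChange_comp _ _

/-- The `B[M]`-module structure on `V ⊗_A B = B ⊗[A] V` obtained by base change from
the `A[M]`-module `V`: `M` acts on the tensor factor `V` and `B` on the tensor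
factor `B`. -/
noncomputable instance bcModule : Module (MonoidAlgebra B M) (B ⊗[A] V) :=
  Module.compHom (B ⊗[A] V)
    ((MonoidAlgebra.lift B (Module.End B (B ⊗[A] V)) M)
      (bcRep (A := A) (M := M) (B := B) (V := V))).toRingHom

lemma bc_smul_def (s : MonoidAlgebra B M) (y : B ⊗[A] V) :
    s • y = ((MonoidAlgebra.lift B (Module.End B (B ⊗[A] V)) M)
      (bcRep (A := A) (M := M) (B := B) (V := V)) s) y := rfl

variable {W : Type*} [AddCommGroup W] [Module A W] [Module (MonoidAlgebra A M) W]
  [IsScalarTower A (MonoidAlgebra A M) W]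

lemma restrict_comm (φ : V →ₗ[MonoidAlgebra A M] W) (m : M) :
    (LinearMap.restrictScalars A φ) ∘ₗ (mAct (A := A) (V := V) m)
      = (mAct (A := A) (V := W) m) ∘ₗ (LinearMap.restrictScalars A φ) := by
  ext v
  show φ (MonoidAlgebra.of A M m • v) = MonoidAlgebra.of A M m • φ v
  exact map_smul φ _ v

lemma baseChange_equivariant (φ : V →ₗ[MonoidAlgebra A M] W)
    (s : MonoidAlgebra B M) (x : B ⊗[A] V) :
    LinearMap.baseChange B (LinearMap.restrictScalars A φ) (s • x)
      = s • (LinearMap.baseChange B (LinearMap.restrictScalars A φ) x) := by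
  rw [bc_smul_def, bc_smul_def]
  induction s using MonoidAlgebra.induction_on with
  | of m =>
      rw [MonoidAlgebra.lift_of, MonoidAlgebra.lift_of]
      show (LinearMap.baseChange B (LinearMap.restrictScalars A φ) ∘ₗ
        LinearMap.baseChange B (mAct (A := A) (V := V) m)) x
        = (LinearMap.baseChange B (mAct (A := A) (V := W) m) ∘ₗ
          LinearMap.baseChange B (LinearMap.restrictScalars A φ)) x
      rw [← LinearMap.baseChange_comp, ← LinearMap.baseChange_comp, restrict_comm]
  | add f g hf hg =>
      rw [map_add, map_add, LinearMap.add_apply, LinearMap.add_apply, map_add, hf, hg]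
  | smul r f hf =>
      rw [map_smul, map_smul, LinearMap.smul_apply, LinearMap.smul_apply, map_smul, hf]

/-- `φ ⊗ b` induces a `B[M]`-linear map `V ⊗_A B → W ⊗_A B`, determined by
`v ⊗ b' ↦ φ(v) ⊗ b·b'`. -/
noncomputable def pairMap (φ : V →ₗ[MonoidAlgebra A M] W) (b : B) :
    (B ⊗[A] V) →ₗ[MonoidAlgebra B M] (B ⊗[A] W) where
  toFun x := b • (LinearMap.baseChange B (LinearMap.restrictScalars A φ) x)
  map_add' x y := by
    show b • _ = b • _ + b • _
    rw [map_add, smul_add]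
  map_smul' s x := by
    simp only [RingHom.id_apply]
    rw [baseChange_equivariant, bc_smul_def, bc_smul_def, map_smul]

lemma pairMap_apply (φ : V →ₗ[MonoidAlgebra A M] W) (b : B) (x : B ⊗[A] V) :
    pairMap φ b x = b • (LinearMap.baseChange B (LinearMap.restrictScalars A φ) x) := rfl

/-- The natural map `Hom_{A[M]}(V, W) ⊗_A B → Hom_{B[M]}(V ⊗_A B, W ⊗_A B)` sending
`φ ⊗ b` to the `B[M]`-linear map determined by `v ⊗ b' ↦ φ(v) ⊗ b·b'`. -/
noncomputable def natBaseChangeHom :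
    ((V →ₗ[MonoidAlgebra A M] W) ⊗[A] B) →+
      ((B ⊗[A] V) →ₗ[MonoidAlgebra B M] (B ⊗[A] W)) :=
  TensorProduct.liftAddHom
    { toFun := fun φ =>
        { toFun := fun b => pairMap φ b
          map_zero' := LinearMap.ext fun x => by
            rw [pairMap_apply, zero_smul]; rfl
          map_add' := fun b b' => LinearMap.ext fun x => by
            rw [pairMap_apply, add_smul]; rfl }
      map_zero' := AddMonoidHom.ext fun b => LinearMap.ext fun x => by
        show pairMap 0 b x = 0
        rw [pairMap_apply, LinearMap.restrictScalars_zero]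
        simp
      map_add' := fun φ ψ => AddMonoidHom.ext fun b => LinearMap.ext fun x => by
        show pairMap (φ + ψ) b x = pairMap φ b x + pairMap ψ b x
        rw [pairMap_apply, pairMap_apply, pairMap_apply,
          LinearMap.restrictScalars_add, LinearMap.baseChange_add]
        rw [LinearMap.add_apply, smul_add] }
    (fun a φ b => LinearMap.ext fun x => by
      show pairMap (a • φ) b x = pairMap φ (a • b) x
      rw [pairMap_apply, pairMap_apply, LinearMap.restrictScalars_smul,
        LinearMap.baseChange_smul, LinearMap.smul_apply, smul_comm b a, smul_assoc])


/-- The finite free case of Proposition 2.5: if `B` is an `A`-algebra that is finitely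
generated and free as an `A`-module, then for all `A[M]`-modules `V` and `W` the
natural map `Hom_{A[M]}(V, W) ⊗_A B → Hom_{B[M]}(V ⊗_A B, W ⊗_A B)`, sending `φ ⊗ b`
to the `B[M]`-linear map determined by `v ⊗ b' ↦ φ(v) ⊗ b·b'`, is bijective. -/
lemma bc_of_smul (m : M) (y : B ⊗[A] V) :
    (MonoidAlgebra.of B M m) • y = LinearMap.baseChange B (mAct (A := A) (V := V) m) y := by
  rw [bc_smul_def, MonoidAlgebra.lift_of]; rfl

lemma bc_single_one_smul (b : B) (y : B ⊗[A] V) :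
    (MonoidAlgebra.single (1 : M) b) • y = b • y := by
  rw [bc_smul_def, MonoidAlgebra.lift_single, map_one]
  rfl

theorem natBaseChangeHom_bijective_of_finite_free
    [Module.Free A B] [Module.Finite A B] :
    Function.Bijective
      ⇑(natBaseChangeHom (A := A) (M := M) (B := B) (V := V) (W := W)) := by
  classical
  set 𝓑 := Module.Free.chooseBasis A B with h𝓑
  constructor
  · refine (injective_iff_map_eq_zero _).mpr fun t ht => ?_
    have hzero : ∀ i, coordR 𝓑 i t = 0 := by
      intro i
      apply LinearMap.ext
      intro v
      have h1 : (natBaseChangeHom (A := A) (M := M) (B := B) (V := V) (W := W) t) (1 ⊗ₜ[A] v)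
          = ∑ j, 𝓑 j ⊗ₜ[A] (coordR 𝓑 j t) v := by
        conv_lhs => rw [← sum_coordR 𝓑 t]
        rw [map_sum, LinearMap.coe_sum, Finset.sum_apply]
        refine Finset.sum_congr rfl fun j _ => ?_
        show pairMap (coordR 𝓑 j t) (𝓑 j) (1 ⊗ₜ[A] v) = _
        rw [pairMap_apply, LinearMap.baseChange_tmul, TensorProduct.smul_tmul',
          smul_eq_mul, mul_one]
        rfl
      rw [ht] at h1
      have h2 := coordL_basis_sum 𝓑 (fun j => (coordR 𝓑 j t) v) i
      rw [← h1] at h2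
      simpa using h2.symm
    calc t = ∑ i, coordR 𝓑 i t ⊗ₜ[A] 𝓑 i := (sum_coordR 𝓑 t).symm
      _ = 0 := by simp [hzero]
  · intro f
    have hb : ∀ (b : B) (x : B ⊗[A] V), f (b • x) = b • f x := fun b x => by
      rw [← bc_single_one_smul (M := M) (V := V), map_smul, bc_single_one_smul]
    have hm : ∀ (m : M) (x : B ⊗[A] V),
        f (LinearMap.baseChange B (mAct (A := A) (V := V) m) x)
          = LinearMap.baseChange B (mAct (A := A) (V := W) m) (f x) := fun m x => by
      rw [← bc_of_smul, map_smul, bc_of_smul]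
    let φ : Module.Free.ChooseBasisIndex A B → (V →ₗ[MonoidAlgebra A M] W) := fun i =>
      { toFun := fun v => coordL 𝓑 i (f (1 ⊗ₜ[A] v))
        map_add' := fun v w => by
          show coordL 𝓑 i (f (1 ⊗ₜ[A] (v + w))) = _
          rw [TensorProduct.tmul_add, map_add, map_add]
        map_smul' := fun r v => by
          show coordL 𝓑 i (f (1 ⊗ₜ[A] (r • v))) = r • coordL 𝓑 i (f (1 ⊗ₜ[A] v))
          induction r using MonoidAlgebra.induction_on with
          | of m =>
              have e1 : (1 : B) ⊗ₜ[A] (MonoidAlgebra.of A M m • v)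
                  = LinearMap.baseChange B (mAct (A := A) (V := V) m) (1 ⊗ₜ[A] v) := by
                rw [LinearMap.baseChange_tmul]; rfl
              rw [e1, hm, coordL_baseChange]
              rfl
          | add r s hr hs => rw [add_smul, TensorProduct.tmul_add, map_add, map_add,
              hr, hs, add_smul]
          | smul a r hr =>
              have ha : ∀ (x : B ⊗[A] V), f (a • x) = a • f x := fun x => by
                rw [← algebraMap_smul B a x, hb, algebraMap_smul]
              rw [smul_assoc, TensorProduct.tmul_smul, ha, map_smul, hr, smul_assoc] }
    refine ⟨∑ i, φ i ⊗ₜ[A] 𝓑 i, ?_⟩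
    apply LinearMap.ext
    intro x
    induction x using TensorProduct.induction_on with
    | zero => simp
    | tmul b v =>
        rw [map_sum, LinearMap.coe_sum, Finset.sum_apply]
        have e1 : ∀ i, (natBaseChangeHom (A := A) (M := M) (B := B) (V := V) (W := W)
            (φ i ⊗ₜ[A] 𝓑 i)) (b ⊗ₜ[A] v) = (b * 𝓑 i) ⊗ₜ[A] φ i v := by
          intro i
          show pairMap (φ i) (𝓑 i) (b ⊗ₜ[A] v) = _
          rw [pairMap_apply, LinearMap.baseChange_tmul, TensorProduct.smul_tmul',
            smul_eq_mul, mul_comm]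
          rfl
        have e2 : b ⊗ₜ[A] v = b • ((1 : B) ⊗ₜ[A] v) := by
          rw [TensorProduct.smul_tmul', smul_eq_mul, mul_one]
        calc ∑ i, (natBaseChangeHom (A := A) (M := M) (B := B) (V := V) (W := W)
              (φ i ⊗ₜ[A] 𝓑 i)) (b ⊗ₜ[A] v)
            = ∑ i, (b * 𝓑 i) ⊗ₜ[A] φ i v := Finset.sum_congr rfl fun i _ => e1 i
          _ = b • ∑ i, 𝓑 i ⊗ₜ[A] coordL 𝓑 i (f (1 ⊗ₜ[A] v)) := by
              rw [Finset.smul_sum]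
              refine Finset.sum_congr rfl fun i _ => ?_
              rw [TensorProduct.smul_tmul', smul_eq_mul]
              rfl
          _ = f (b ⊗ₜ[A] v) := by rw [sum_coordL, ← hb, ← e2]
    | add x y hx hy => rw [map_add, hx, hy, map_add]


end
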